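/- Let p be a prime and let G be a group. For all integers m, n ≥ 1, the commutator subgroup [γ_m^p G, γ_n^p G] is contained in γ_{m+n}^p G. -/

import Mathlib

/-! Common definitions following the paper "Residual p properties of mapping class groups
and surface groups" by L. Paris. -/

/-- The commutator `[g,h] = g⁻¹h⁻¹gh`. -/
def commAB {G : Type*} [Group G] (g h : G) : G := g⁻¹ * h⁻¹ * g * h

/-- The commutator subgroup `[K,H]`, generated by all `[g,h]` with `g ∈ K`, `h ∈ H`. -/
def commSub {G : Type*} [Group G] (K H : Subgroup G) : Subgroup G :=
  Subgroup.closure {x | ∃ g ∈ K, ∃ h ∈ H, x = commAB g h}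

/-- The subgroup `[K,H]^p`, generated by all `[g,h]` (`g ∈ K`, `h ∈ H`) together with all
`h^p` (`h ∈ H`). -/
def pComm (p : ℕ) {G : Type*} [Group G] (K H : Subgroup G) : Subgroup G :=
  Subgroup.closure ({x | ∃ g ∈ K, ∃ h ∈ H, x = commAB g h} ∪ {x | ∃ h ∈ H, x = h ^ p})

/-- The lower `𝔽_p`-linear central filtration: `γ_1^p G = G` and
`γ_{n+1}^p G = [G, γ_n^p G]^p` (with the harmless convention `γ_0^p G = G`). -/
def gammaP (p : ℕ) (G : Type*) [Group G] : ℕ → Subgroup G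
  | 0 => ⊤
  | 1 => ⊤
  | n + 2 => pComm p ⊤ (gammaP p G (n + 1))

theorem pComm_top_normal (p : ℕ) {G : Type*} [Group G] {H : Subgroup G} (hH : H.Normal) :
    (pComm p ⊤ H).Normal := by
  constructor
  intro x hx g
  unfold pComm at hx ⊢
  induction hx using Subgroup.closure_induction with
  | mem y hy =>
    apply Subgroup.subset_closure
    rcases hy with ⟨a, -, h, hh, rfl⟩ | ⟨h, hh, rfl⟩
    · exact Or.inl ⟨g * a * g⁻¹, trivial, g * h * g⁻¹, hH.conj_mem h hh g,
        by unfold commAB; group⟩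
    · exact Or.inr ⟨g * h * g⁻¹, hH.conj_mem h hh g, (conj_pow).symm⟩
  | one => simpa using Subgroup.one_mem _
  | mul a b ha hb iha ihb =>
    have e : g * (a * b) * g⁻¹ = (g * a * g⁻¹) * (g * b * g⁻¹) := by group
    rw [e]; exact Subgroup.mul_mem _ iha ihb
  | inv a ha iha =>
    have e : g * a⁻¹ * g⁻¹ = (g * a * g⁻¹)⁻¹ := by group
    rw [e]; exact Subgroup.inv_mem _ iha

instance gammaP_normal (p : ℕ) (G : Type*) [Group G] : ∀ n, (gammaP p G n).Normal
  | 0 => by unfold gammaP; infer_instance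
  | 1 => by unfold gammaP; infer_instance
  | n + 2 => by unfold gammaP; exact pComm_top_normal p (gammaP_normal p G (n + 1))

/-- `G` is residually `p`: every nontrivial element survives in some finite `p`-group
quotient. -/
def IsResiduallyP (p : ℕ) (G : Type*) [Group G] : Prop :=
  ∀ g : G, g ≠ 1 → ∃ (P : Type) (_ : Group P) (_ : Finite P) (φ : G →* P),
    IsPGroup p P ∧ Function.Surjective φ ∧ φ g ≠ 1

/-- `G` is conjugacy `p`-separable. -/
def IsConjPSeparable (p : ℕ) (G : Type*) [Group G] : Prop :=
  ∀ g h : G, IsConj g h ∨ ∃ (P : Type) (_ : Group P) (_ : Finite P) (φ : G →* P),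
    IsPGroup p P ∧ Function.Surjective φ ∧ ¬ IsConj (φ g) (φ h)

/-- Property A: every automorphism of `G` preserving every conjugacy class is inner. -/
def PropertyA (G : Type*) [Group G] : Prop :=
  ∀ α : MulAut G, (∀ g : G, IsConj g (α g)) → α ∈ (MulAut.conj : G →* MulAut G).range

/-- `A_n`: the kernel of the natural homomorphism `Aut(G) → Aut(G/γ_{n+1}^p G)`, i.e. the
automorphisms acting trivially modulo `γ_{n+1}^p G`. -/
def An (p : ℕ) (G : Type*) [Group G] (n : ℕ) : Subgroup (MulAut G) where
  carrier := {α | ∀ g : G, g⁻¹ * α g ∈ gammaP p G (n + 1)}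
  one_mem' := by intro g; simpa using Subgroup.one_mem _
  mul_mem' := by
    intro a b ha hb g
    have e : g⁻¹ * (a * b) g = (g⁻¹ * b g) * ((b g)⁻¹ * a (b g)) := by
      rw [MulAut.mul_apply]; group
    rw [e]; exact Subgroup.mul_mem _ (hb g) (ha (b g))
  inv_mem' := by
    intro a ha g
    have h := ha ((a⁻¹ : MulAut G) g)
    rw [MulAut.apply_inv_self] at h
    have e : g⁻¹ * (a⁻¹ : MulAut G) g = (((a⁻¹ : MulAut G) g)⁻¹ * g)⁻¹ := by group
    rw [e]; exact Subgroup.inv_mem _ h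

theorem mem_An {p : ℕ} {G : Type*} [Group G] {n : ℕ} {α : MulAut G} :
    α ∈ An p G n ↔ ∀ g : G, g⁻¹ * α g ∈ gammaP p G (n + 1) := Iff.rfl

/-- `I_p(G)`: the kernel of the natural homomorphism `Aut(G) → Aut(G/γ_2^p G)`. -/
abbrev Ip (p : ℕ) (G : Type*) [Group G] : Subgroup (MulAut G) := An p G 1

/-- `Inn(G)`, viewed as a subgroup of `I_p(G)`. -/
def InnSub (p : ℕ) (G : Type*) [Group G] : Subgroup (Ip p G) :=
  Subgroup.comap (Ip p G).subtype (MulAut.conj : G →* MulAut G).range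

instance innSub_normal (p : ℕ) (G : Type*) [Group G] : (InnSub p G).Normal := by
  constructor
  rintro n hn g
  obtain ⟨x, hx⟩ := hn
  refine ⟨(g : MulAut G) x, ?_⟩
  have hx' : MulAut.conj x = (n : MulAut G) := hx
  show MulAut.conj ((g : MulAut G) x) = ((g * n * g⁻¹ : Ip p G) : MulAut G)
  ext y
  simp only [Subgroup.coe_mul, Subgroup.coe_inv, MulAut.mul_apply, MulAut.conj_apply, ← hx',
    map_mul, map_inv, MulAut.apply_inv_self]

/-- The surface relator `[x_1,y_1][x_2,y_2]⋯[x_ρ,y_ρ]` in the free group on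
`x_1, …, x_ρ, y_1, …, y_ρ`. -/
def surfaceRel (ρ : ℕ) : FreeGroup (Fin ρ ⊕ Fin ρ) :=
  (List.ofFn fun i : Fin ρ =>
    commAB (FreeGroup.of (Sum.inl i)) (FreeGroup.of (Sum.inr i))).prod

/-- The fundamental group of the closed oriented surface of genus `ρ`, given by the
presentation `⟨x_1, …, x_ρ, y_1, …, y_ρ | [x_1,y_1]⋯[x_ρ,y_ρ] = 1⟩`. -/
abbrev SurfaceGroup (ρ : ℕ) : Type :=
  PresentedGroup ({surfaceRel ρ} : Set (FreeGroup (Fin ρ ⊕ Fin ρ)))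
open scoped commutatorElement

lemma commAB_eq {G : Type*} [Group G] (g h : G) : commAB g h = ⁅g⁻¹, h⁻¹⁆ := by
  unfold commAB; group

/-- Commutators `⁅g,h⁆` with `h ∈ γ_n` lie in `γ_{n+1}` (for `n ≥ 1`). -/
lemma comm_mem_gammaP_succ (p : ℕ) {G : Type*} [Group G] (n : ℕ) (g h : G)
    (hh : h ∈ gammaP p G (n + 1)) : ⁅g, h⁆ ∈ gammaP p G (n + 2) := by
  show _ ∈ pComm p ⊤ (gammaP p G (n + 1))
  apply Subgroup.subset_closure
  exact Or.inl ⟨g⁻¹, trivial, h⁻¹, Subgroup.inv_mem _ hh, by rw [commAB_eq]; group⟩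

lemma comm_top_le (p : ℕ) {G : Type*} [Group G] (n : ℕ) :
    ⁅(⊤ : Subgroup G), gammaP p G (n + 1)⁆ ≤ gammaP p G (n + 2) := by
  rw [Subgroup.commutator_le]
  intro g _ h hh
  exact comm_mem_gammaP_succ p n g h hh

lemma pow_mem_gammaP_succ (p : ℕ) {G : Type*} [Group G] (n : ℕ) (h : G)
    (hh : h ∈ gammaP p G (n + 1)) : h ^ p ∈ gammaP p G (n + 2) := by
  show _ ∈ pComm p ⊤ (gammaP p G (n + 1))
  exact Subgroup.subset_closure (Or.inr ⟨h, hh, rfl⟩)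

/-- If `⁅x,y⁆` is central then `⁅x^k, y⁆ = ⁅x,y⁆^k`. -/
lemma comm_pow_of_central {Q : Type*} [Group Q] (x y : Q)
    (hc : ∀ z : Q, Commute ⁅x, y⁆ z) : ∀ k : ℕ, ⁅x ^ k, y⁆ = ⁅x, y⁆ ^ k := by
  intro k
  induction k with
  | zero => simp
  | succ k ih =>
    have e : ⁅x ^ (k + 1), y⁆ = x * ⁅x ^ k, y⁆ * x⁻¹ * ⁅x, y⁆ := by
      simp only [commutatorElement_def, pow_succ, pow_succ']
      group
    rw [e, ih, pow_succ]
    have hx : x * ⁅x, y⁆ ^ k * x⁻¹ = ⁅x, y⁆ ^ k := by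
      have := ((hc x).pow_left k).symm.eq
      rw [this]; group
    rw [hx]

/-- The key induction: `⁅γ_{m+1}, γ_{n+1}⁆ ≤ γ_{m+n+2}`. -/
lemma gammaP_comm_le (p : ℕ) (G : Type*) [Group G] :
    ∀ m n : ℕ, ⁅gammaP p G (m + 1), gammaP p G (n + 1)⁆ ≤ gammaP p G (m + n + 2) := by
  intro m
  induction m with
  | zero =>
    intro n
    simp only [Nat.zero_add]
    exact comm_top_le p n
  | succ m ih =>
    intro n
    set N : Subgroup G := gammaP p G (m + 1 + n + 2) with hN
    have hNnormal : N.Normal := gammaP_normal p G _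
    -- the three subgroups lemma, in the quotient G ⧸ N
    have h3 : ⁅⁅(⊤ : Subgroup G), gammaP p G (m + 1)⁆, gammaP p G (n + 1)⁆ ≤ N := by
      set π := QuotientGroup.mk' N
      have key : ⁅⁅(⊤ : Subgroup G).map π, (gammaP p G (m + 1)).map π⁆,
          (gammaP p G (n + 1)).map π⁆ = ⊥ := by
        apply Subgroup.commutator_commutator_eq_bot_of_rotate
        · -- ⁅⁅γ_{m+1}, γ_{n+1}⁆, ⊤⁆ ≤ N
          rw [← Subgroup.map_commutator, ← Subgroup.map_commutator,
            Subgroup.map_eq_bot_iff, QuotientGroup.ker_mk']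
          calc ⁅⁅gammaP p G (m + 1), gammaP p G (n + 1)⁆, (⊤ : Subgroup G)⁆
              ≤ ⁅(⊤ : Subgroup G), ⁅gammaP p G (m + 1), gammaP p G (n + 1)⁆⁆ :=
                Subgroup.commutator_comm_le _ _
            _ ≤ ⁅(⊤ : Subgroup G), gammaP p G (m + n + 2)⁆ :=
                Subgroup.commutator_mono le_rfl (ih n)
            _ ≤ gammaP p G (m + n + 3) := comm_top_le p (m + n + 1)
            _ = N := by rw [hN]; ring_nf
        · -- ⁅⁅γ_{n+1}, ⊤⁆, γ_{m+1}⁆ ≤ N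
          rw [← Subgroup.map_commutator, ← Subgroup.map_commutator,
            Subgroup.map_eq_bot_iff, QuotientGroup.ker_mk']
          calc ⁅⁅gammaP p G (n + 1), (⊤ : Subgroup G)⁆, gammaP p G (m + 1)⁆
              ≤ ⁅gammaP p G (m + 1), ⁅gammaP p G (n + 1), (⊤ : Subgroup G)⁆⁆ :=
                Subgroup.commutator_comm_le _ _
            _ ≤ ⁅gammaP p G (m + 1), gammaP p G (n + 2)⁆ := by
                apply Subgroup.commutator_mono le_rfl
                exact le_trans (Subgroup.commutator_comm_le _ _) (comm_top_le p n)
            _ ≤ gammaP p G (m + (n + 1) + 2) := ih (n + 1)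
            _ = N := by rw [hN]; ring_nf
      rw [← Subgroup.map_commutator, ← Subgroup.map_commutator,
        Subgroup.map_eq_bot_iff, QuotientGroup.ker_mk'] at key
      exact key
    -- centrality of γ_{m+n+2} mod N
    have hcent : ∀ c ∈ gammaP p G (m + n + 2), ∀ g : G, ⁅g, c⁆ ∈ N := by
      intro c hc g
      have : ⁅g, c⁆ ∈ gammaP p G (m + n + 3) :=
        comm_mem_gammaP_succ p (m + n + 1) g c hc
      rwa [hN, show m + 1 + n + 2 = m + n + 3 by ring]
    have hpowN : ∀ c ∈ gammaP p G (m + n + 2), c ^ p ∈ N := by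
      intro c hc
      have := pow_mem_gammaP_succ p (m + n + 1) c hc
      rwa [hN, show m + 1 + n + 2 = m + n + 3 by ring]
    rw [Subgroup.commutator_le]
    intro k hk
    show ∀ h ∈ gammaP p G (n + 1), ⁅k, h⁆ ∈ N
    have hk' : k ∈ pComm p ⊤ (gammaP p G (m + 1)) := hk
    clear hk
    unfold pComm at hk'
    induction hk' using Subgroup.closure_induction with
    | mem y hy =>
      intro h hh
      rcases hy with ⟨g, -, a, ha, rfl⟩ | ⟨a, ha, rfl⟩
      · -- commutator generator: use the three subgroups lemma
        apply h3
        apply Subgroup.commutator_mem_commutator _ hh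
        rw [commAB_eq]
        exact Subgroup.commutator_mem_commutator trivial (Subgroup.inv_mem _ ha)
      · -- p-th power generator: work in the quotient
        set π := QuotientGroup.mk' N
        have hahC : ⁅a, h⁆ ∈ gammaP p G (m + n + 2) :=
          ih n (Subgroup.commutator_mem_commutator ha hh)
        have hcentral : ∀ z : G ⧸ N, Commute ⁅π a, π h⁆ z := by
          intro z
          obtain ⟨g, rfl⟩ := QuotientGroup.mk'_surjective N z
          have : π ⁅g, ⁅a, h⁆⁆ = 1 := by
            rw [← MonoidHom.mem_ker, QuotientGroup.ker_mk']
            exact hcent _ hahC g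
          rw [map_commutatorElement, map_commutatorElement] at this
          exact ((commutatorElement_eq_one_iff_commute.mp this)).symm
        have : π ⁅a ^ p, h⁆ = 1 := by
          rw [map_commutatorElement, map_pow, comm_pow_of_central _ _ hcentral,
            ← map_commutatorElement, ← map_pow, ← MonoidHom.mem_ker,
            QuotientGroup.ker_mk']
          exact hpowN _ hahC
        rwa [← MonoidHom.mem_ker, QuotientGroup.ker_mk'] at this
    | one =>
      intro h hh
      simpa using Subgroup.one_mem N
    | mul k₁ k₂ _ _ ih₁ ih₂ =>
      intro h hh
      have e : ⁅k₁ * k₂, h⁆ = k₁ * ⁅k₂, h⁆ * k₁⁻¹ * ⁅k₁, h⁆ := by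
        simp only [commutatorElement_def]; group
      rw [e]
      exact Subgroup.mul_mem _ (hNnormal.conj_mem _ (ih₂ h hh) k₁) (ih₁ h hh)
    | inv k₀ _ ih₀ =>
      intro h hh
      have e : ⁅k₀⁻¹, h⁆ = k₀⁻¹ * ⁅k₀, h⁆⁻¹ * k₀ := by
        simp only [commutatorElement_def]; group
      rw [e]
      have := hNnormal.conj_mem _ (Subgroup.inv_mem _ (ih₀ h hh)) k₀⁻¹
      simpa using this

/-- **Lemma 2.1.** For all `m, n ≥ 1`, `[γ_m^p G, γ_n^p G] ⊆ γ_{m+n}^p G`. -/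
theorem gammaP_commSub_le (p : ℕ) (hp : p.Prime) (G : Type*) [Group G] (m n : ℕ)
    (hm : 1 ≤ m) (hn : 1 ≤ n) :
    commSub (gammaP p G m) (gammaP p G n) ≤ gammaP p G (m + n) := by
  obtain ⟨m, rfl⟩ := Nat.exists_eq_add_of_le hm
  obtain ⟨n, rfl⟩ := Nat.exists_eq_add_of_le hn
  have step1 : commSub (gammaP p G (1 + m)) (gammaP p G (1 + n)) ≤
      ⁅gammaP p G (1 + m), gammaP p G (1 + n)⁆ := by
    apply (Subgroup.closure_le _).mpr
    rintro x ⟨g, hg, h, hh, rfl⟩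
    rw [commAB_eq]
    exact Subgroup.commutator_mem_commutator (Subgroup.inv_mem _ hg) (Subgroup.inv_mem _ hh)
  refine le_trans step1 ?_
  have := gammaP_comm_le p G m n
  rw [show 1 + m = m + 1 by ring, show 1 + n = n + 1 by ring,
    show m + 1 + (n + 1) = m + n + 2 by ring]
  exact this
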